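/- Let ρ and ρ' be quantum states on ℂ^N with eigen-decompositions ρ = Σᵢ aᵢ|aᵢ⟩⟨aᵢ| and ρ' = Σᵢ gᵢ|gᵢ⟩⟨gᵢ|. Then Σ_{i,j} min(aᵢ|⟨aᵢ|gⱼ⟩|², gⱼ|⟨aᵢ|gⱼ⟩|²) ≥ 1 − 2(1 − F(ρ,ρ'))^{1/4}, where F denotes fidelity. -/

import Mathlib

open Matrix
open scoped Kronecker ComplexOrder

set_option linter.unusedSectionVars false
noncomputable section

def mfun {n : Type*} [Fintype n] [DecidableEq n] (f : ℝ → ℝ) (A : Matrix n n ℂ) : Matrix n n ℂ :=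
  if h : A.IsHermitian then
    h.eigenvectorUnitary.1 * Matrix.diagonal (fun i => (f (h.eigenvalues i) : ℂ)) *
      (star h.eigenvectorUnitary.1)
  else 0

def psqrt {n : Type*} [Fintype n] [DecidableEq n] (A : Matrix n n ℂ) : Matrix n n ℂ :=
  mfun Real.sqrt A

def mlog {n : Type*} [Fintype n] [DecidableEq n] (A : Matrix n n ℂ) : Matrix n n ℂ :=
  mfun Real.log A

def traceNorm {n : Type*} [Fintype n] [DecidableEq n] (A : Matrix n n ℂ) : ℝ :=
  ((psqrt (Aᴴ * A)).trace).re

def fid {n : Type*} [Fintype n] [DecidableEq n] (ρ σ : Matrix n n ℂ) : ℝ :=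
  traceNorm (psqrt ρ * psqrt σ)

def vNEntropy {n : Type*} [Fintype n] [DecidableEq n] (A : Matrix n n ℂ) : ℝ :=
  - ((A * mlog A).trace).re

def relEnt {n : Type*} [Fintype n] [DecidableEq n] (ρ σ : Matrix n n ℂ) : ℝ :=
  ((ρ * mlog ρ).trace - (ρ * mlog σ).trace).re


section lems
variable {n : Type*} [Fintype n] [DecidableEq n] {A : Matrix n n ℂ} (f g : ℝ → ℝ)

lemma mfun_of_isHermitian (hA : A.IsHermitian) :
    mfun f A = hA.eigenvectorUnitary.1 *
      Matrix.diagonal (fun i => (f (hA.eigenvalues i) : ℂ)) * (star hA.eigenvectorUnitary.1) := by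
  rw [mfun, dif_pos hA]

lemma mfun_mul (hA : A.IsHermitian) :
    mfun f A * mfun g A = mfun (fun x => f x * g x) A := by
  rw [mfun_of_isHermitian f hA, mfun_of_isHermitian g hA,
    mfun_of_isHermitian (fun x => f x * g x) hA]
  have h1 : (star hA.eigenvectorUnitary.1 : Matrix n n ℂ) * hA.eigenvectorUnitary.1 = 1 :=
    Unitary.coe_star_mul_self hA.eigenvectorUnitary
  calc hA.eigenvectorUnitary.1 * Matrix.diagonal (fun i => (f (hA.eigenvalues i) : ℂ)) *
        (star hA.eigenvectorUnitary.1) * (hA.eigenvectorUnitary.1 *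
        Matrix.diagonal (fun i => (g (hA.eigenvalues i) : ℂ)) * (star hA.eigenvectorUnitary.1))
      = hA.eigenvectorUnitary.1 * (Matrix.diagonal (fun i => (f (hA.eigenvalues i) : ℂ)) *
        Matrix.diagonal (fun i => (g (hA.eigenvalues i) : ℂ))) * (star hA.eigenvectorUnitary.1) := by
        simp only [Matrix.mul_assoc]
        rw [← Matrix.mul_assoc (star hA.eigenvectorUnitary.1) hA.eigenvectorUnitary.1, h1, Matrix.one_mul]
    _ = _ := by rw [Matrix.diagonal_mul_diagonal]; norm_cast

lemma mfun_isHermitian (hA : A.IsHermitian) : (mfun f A).IsHermitian := by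
  rw [mfun_of_isHermitian f hA, Matrix.star_eq_conjTranspose]
  apply Matrix.isHermitian_mul_mul_conjTranspose
  rw [Matrix.IsHermitian, Matrix.diagonal_conjTranspose]
  have : (star fun i => (f (hA.eigenvalues i) : ℂ)) = fun i => (f (hA.eigenvalues i) : ℂ) := by
    funext i
    simp [Complex.conj_ofReal]
  rw [this]

lemma mfun_trace (hA : A.IsHermitian) :
    (mfun f A).trace = ∑ i, (f (hA.eigenvalues i) : ℂ) := by
  rw [mfun_of_isHermitian f hA, Matrix.trace_mul_cycle,
    Unitary.coe_star_mul_self hA.eigenvectorUnitary, Matrix.one_mul, Matrix.trace_diagonal]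

lemma mfun_congr (hA : A.IsHermitian) (h : ∀ i, f (hA.eigenvalues i) = g (hA.eigenvalues i)) :
    mfun f A = mfun g A := by
  rw [mfun_of_isHermitian f hA, mfun_of_isHermitian g hA]
  have : (fun i => (f (hA.eigenvalues i) : ℂ)) = fun i => (g (hA.eigenvalues i) : ℂ) := by
    ext i; rw [h i]
  rw [this]

lemma mfun_id (hA : A.IsHermitian) : mfun (fun x => x) A = A := by
  rw [mfun_of_isHermitian _ hA]
  exact hA.spectral_theorem.symm

lemma mfun_posSemidef (hA : A.IsHermitian) (h : ∀ i, 0 ≤ f (hA.eigenvalues i)) :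
    (mfun f A).PosSemidef := by
  rw [mfun_of_isHermitian f hA]
  rw [Matrix.star_eq_conjTranspose]
  refine Matrix.PosSemidef.mul_mul_conjTranspose_same ?_ _
  refine Matrix.posSemidef_diagonal_iff.mpr fun i => ?_
  rw [Complex.le_def]
  simp [h i]

end lems

section psq
variable {n : Type*} [Fintype n] [DecidableEq n] {A B : Matrix n n ℂ}

lemma psqrt_eq_sqrt (hA : A.PosSemidef) : psqrt A = cfc Real.sqrt A := by
  rw [psqrt, mfun_of_isHermitian Real.sqrt hA.1, hA.1.cfc_eq]
  rfl

lemma psqrt_posSemidef (hA : A.PosSemidef) : (psqrt A).PosSemidef := by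
  rw [psqrt]; exact mfun_posSemidef _ hA.1 fun i => Real.sqrt_nonneg _

lemma psqrt_mul_self (hA : A.PosSemidef) : psqrt A * psqrt A = A := by
  rw [psqrt, mfun_mul _ _ hA.1]
  rw [mfun_congr _ (fun x => x) hA.1 fun i => Real.mul_self_sqrt (hA.eigenvalues_nonneg i)]
  exact mfun_id hA.1

lemma psqrt_eq_of_sq (hA : A.PosSemidef) (hB : B.PosSemidef) (h : B * B = A) :
    psqrt A = B := by
  rw [psqrt_eq_sqrt hA]
  have hnn : ∀ x ∈ spectrum ℝ B, 0 ≤ x := by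
    intro x hx
    rw [hB.1.spectrum_real_eq_range_eigenvalues] at hx
    obtain ⟨i, rfl⟩ := hx
    exact hB.eigenvalues_nonneg i
  have hBs : IsSelfAdjoint B := hB.1
  have e : B * B = cfc (fun x : ℝ => x * x) B := by
    rw [cfc_mul (fun x : ℝ => x) (fun x : ℝ => x) B, cfc_id' ℝ B]
  rw [← h, e, ← cfc_comp' Real.sqrt (fun x : ℝ => x * x) B]
  rw [cfc_congr (g := fun x : ℝ => x) (fun x hx => Real.sqrt_mul_self (hnn x hx)), cfc_id' ℝ B]

end psq

section fip
variable {n : Type*} [Fintype n] [DecidableEq n]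

def fip (X Y : Matrix n n ℂ) : ℝ := ((Xᴴ * Y).trace).re

lemma fip_expand (X Y : Matrix n n ℂ) :
    fip X Y = ∑ p : n × n, ((starRingEnd ℂ) (X p.1 p.2) * Y p.1 p.2).re := by
  rw [fip, Matrix.trace]
  have : ∀ j, (Xᴴ * Y).diag j = ∑ i, (starRingEnd ℂ) (X i j) * Y i j := by
    intro j
    rw [Matrix.diag_apply, Matrix.mul_apply]
    exact Finset.sum_congr rfl fun i _ => by rw [Matrix.conjTranspose_apply]; rfl
  rw [Fintype.sum_prod_type]
  rw [Complex.re_sum]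
  rw [Finset.sum_comm]
  exact Finset.sum_congr rfl fun j _ => by rw [this j, Complex.re_sum]

lemma fip_self_eq (X : Matrix n n ℂ) : fip X X = ∑ p : n × n, ‖X p.1 p.2‖ ^ 2 := by
  rw [fip_expand]
  refine Finset.sum_congr rfl fun p _ => ?_
  rw [mul_comm, Complex.mul_conj]
  rw [Complex.ofReal_re]
  rw [Complex.normSq_eq_norm_sq]

lemma fip_self_nonneg (X : Matrix n n ℂ) : 0 ≤ fip X X := by
  rw [fip_self_eq]; exact Finset.sum_nonneg fun p _ => sq_nonneg _

lemma fip_cs (X Y : Matrix n n ℂ) :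
    fip X Y ≤ Real.sqrt (fip X X) * Real.sqrt (fip Y Y) := by
  have h1 : fip X Y ≤ ∑ p : n × n, ‖X p.1 p.2‖ * ‖Y p.1 p.2‖ := by
    rw [fip_expand]
    refine Finset.sum_le_sum fun p _ => ?_
    refine le_trans (Complex.re_le_norm _) ?_
    rw [norm_mul]
    apply le_of_eq
    rw [RCLike.norm_conj]
  refine le_trans h1 ?_
  set S := ∑ p : n × n, ‖X p.1 p.2‖ * ‖Y p.1 p.2‖ with hS
  have hS0 : 0 ≤ S := Finset.sum_nonneg fun p _ =>
    mul_nonneg (norm_nonneg _) (norm_nonneg _)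
  have h2 : S ^ 2 ≤ (∑ p : n × n, ‖X p.1 p.2‖ ^ 2) * ∑ p : n × n, ‖Y p.1 p.2‖ ^ 2 :=
    Finset.sum_mul_sq_le_sq_mul_sq _ _ _
  have h3 := Real.sqrt_le_sqrt h2
  rw [Real.sqrt_sq hS0] at h3
  rw [Real.sqrt_mul (Finset.sum_nonneg fun p _ => sq_nonneg _)] at h3
  rw [fip_self_eq, fip_self_eq]
  exact h3

end fip

section key
variable {n : Type*} [Fintype n] [DecidableEq n]

def traceNorm' (A : Matrix n n ℂ) : ℝ := ((psqrt (Aᴴ * A)).trace).re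

lemma traceNorm'_nonneg (X : Matrix n n ℂ) : 0 ≤ traceNorm' X := by
  have hH : (Xᴴ * X).IsHermitian := Matrix.isHermitian_conjTranspose_mul_self X
  rw [traceNorm', psqrt, mfun_trace Real.sqrt hH, Complex.re_sum]
  refine Finset.sum_nonneg fun i _ => ?_
  rw [Complex.ofReal_re]
  exact Real.sqrt_nonneg _

lemma key_ineq (A2 B2 : Matrix n n ℂ) (hA2 : A2ᴴ = A2) (hB2 : B2ᴴ = B2) :
    traceNorm' (A2 * A2 * (B2 * B2)) ^ 2 ≤
      ((A2 * A2 * (B2 * B2)).trace).re *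
        (Real.sqrt (((A2 * A2 * (A2 * A2)).trace).re) *
         Real.sqrt (((B2 * B2 * (B2 * B2)).trace).re)) := by
  set X := A2 * A2 * (B2 * B2) with hX
  have hHps : (Xᴴ * X).PosSemidef := Matrix.posSemidef_conjTranspose_mul_self X
  have hHherm : (Xᴴ * X).IsHermitian := hHps.1
  set H := Xᴴ * X with hH
  set f : ℝ → ℝ := fun t => (Real.sqrt t)⁻¹ with hf
  set W := X * mfun f H with hWdef
  have hWH : Wᴴ = mfun f H * Xᴴ := by
    rw [hWdef, Matrix.conjTranspose_mul, (mfun_isHermitian f hHherm).eq]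
  -- Step 1 : Wᴴ * X = psqrt H
  have hW1 : Wᴴ * X = psqrt H := by
    rw [hWH, Matrix.mul_assoc, ← hH]
    calc mfun f H * H = mfun f H * mfun (fun x => x) H := by rw [mfun_id hHherm]
      _ = mfun (fun x => f x * x) H := mfun_mul f _ hHherm
      _ = mfun Real.sqrt H := by
          refine mfun_congr _ _ hHherm fun i => ?_
          have h0 := hHps.eigenvalues_nonneg i
          rcases eq_or_lt_of_le h0 with h | h
          · rw [← h]; simp
          · have hs : Real.sqrt (hHherm.eigenvalues i) ≠ 0 :=
              ne_of_gt (Real.sqrt_pos.mpr h)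
            simp only [hf]
            rw [inv_mul_eq_div, Real.div_sqrt]
      _ = psqrt H := rfl
  -- Step 2 : Q := Wᴴ * W
  set q : ℝ → ℝ := fun t => (f t * t) * f t with hq
  have hQ : Wᴴ * W = mfun q H := by
    rw [hWH, hWdef, Matrix.mul_assoc, ← Matrix.mul_assoc (Xᴴ) X (mfun f H), ← hH]
    rw [← Matrix.mul_assoc]
    calc mfun f H * H * mfun f H = mfun f H * mfun (fun x => x) H * mfun f H := by
          rw [mfun_id hHherm]
      _ = mfun (fun x => f x * x) H * mfun f H := by rw [mfun_mul f _ hHherm]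
      _ = mfun q H := mfun_mul _ _ hHherm
  have hQherm : (mfun q H)ᴴ = mfun q H := (mfun_isHermitian q hHherm).eq
  have hQQ : mfun q H * mfun q H = mfun q H := by
    rw [mfun_mul q q hHherm]
    refine mfun_congr _ _ hHherm fun i => ?_
    have h0 := hHps.eigenvalues_nonneg i
    rcases eq_or_lt_of_le h0 with h | h
    · rw [← h]; simp [hq, hf]
    · have hs : Real.sqrt (hHherm.eigenvalues i) ≠ 0 := ne_of_gt (Real.sqrt_pos.mpr h)
      have h1 : q (hHherm.eigenvalues i) = 1 := by
        rw [hq]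
        simp only [hf]
        rw [inv_mul_eq_div, Real.div_sqrt, mul_inv_cancel₀ hs]
      simp [h1]
  -- F = fip W X
  have hF : traceNorm' X = fip W X := by
    rw [traceNorm', fip, hW1, ← hH]
  set Qm := mfun q H with hQm
  have hQ' : Wᴴ * W = Qm := hQ
  have hQQ' : Qm * Qm = Qm := hQQ
  have hQherm' : Qmᴴ = Qm := hQherm
  set M := A2 * B2 with hM
  set Y := B2 * (Wᴴ * A2) with hY
  set T := B2 * B2 with hT
  set Z := W * T * Wᴴ with hZ
  have hZherm : Zᴴ = Z := by
    rw [hZ]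
    simp only [Matrix.conjTranspose_mul, Matrix.conjTranspose_conjTranspose, hT, hB2]
    simp only [Matrix.mul_assoc]
  -- c1 : fip W X = fip Mᴴ Y
  have c1 : fip W X = fip Mᴴ Y := by
    rw [fip, fip, Matrix.conjTranspose_conjTranspose]
    congr 1
    rw [hX, hM, hY]
    simp only [Matrix.mul_assoc]
    conv_lhs => rw [Matrix.trace_mul_comm]
    simp only [Matrix.mul_assoc]
    conv_lhs => rw [Matrix.trace_mul_comm]
    simp only [Matrix.mul_assoc]
    rw [hT]
    simp only [Matrix.mul_assoc]
  -- c2 : fip Mᴴ Mᴴ = Re tr X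
  have c2 : fip Mᴴ Mᴴ = (X.trace).re := by
    rw [fip, Matrix.conjTranspose_conjTranspose, hM, hX]
    congr 1
    simp only [Matrix.conjTranspose_mul, hA2, hB2]
    simp only [Matrix.mul_assoc]
    conv_lhs => rw [Matrix.trace_mul_comm]
    simp only [Matrix.mul_assoc]
    conv_lhs => rw [Matrix.trace_mul_comm]
    simp only [Matrix.mul_assoc]
    conv_lhs => rw [Matrix.trace_mul_comm]
    simp only [Matrix.mul_assoc]
    rw [hT]
  -- c3 : fip Y Y = fip Z (A2 * A2)
  have c3 : fip Y Y = fip Z (A2 * A2) := by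
    rw [fip, fip, hY, hZherm, hZ, hT]
    congr 1
    simp only [Matrix.conjTranspose_mul, Matrix.conjTranspose_conjTranspose, hA2, hB2]
    simp only [Matrix.mul_assoc]
    conv_lhs => rw [Matrix.trace_mul_comm]
    simp only [Matrix.mul_assoc]
  -- c4
  have c4 : fip (A2 * A2) (A2 * A2) = ((A2 * A2 * (A2 * A2)).trace).re := by
    rw [fip]
    congr 1
    simp only [Matrix.conjTranspose_mul, hA2]
  -- c5 : fip Z Z = Re tr(T * Qm * (T * Qm))
  have e1 : Z * Z = W * T * (Wᴴ * W) * (T * Wᴴ) := by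
    rw [hZ]; simp only [Matrix.mul_assoc]
  rw [hQ'] at e1
  have c5 : fip Z Z = ((T * Qm * (T * Qm)).trace).re := by
    rw [fip, hZherm, e1]
    congr 1
    have e2 : (W * T * Qm * (T * Wᴴ)).trace = ((T * Qm) * (T * (Wᴴ * W))).trace := by
      simp only [Matrix.mul_assoc]
      conv_lhs => rw [Matrix.trace_mul_comm]
      simp only [Matrix.mul_assoc]
    rw [e2, hQ']
  -- projection bound : Re tr(T*Qm*(T*Qm)) ≤ Re tr(T*T)
  have hproj : (1 - Qm) * (1 - Qm) = 1 - Qm := by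
    have h' : (1 - Qm) * (1 - Qm) = 1 - Qm - Qm + Qm * Qm := by noncomm_ring
    rw [hQQ'] at h'
    rw [h', sub_add_cancel]
  have hTherm : Tᴴ = T := by
    rw [hT, Matrix.conjTranspose_mul, hB2]
  have step_a : ((T * Qm * (T * Qm)).trace).re ≤ ((T * T * Qm).trace).re := by
    have h0 : 0 ≤ fip ((1 - Qm) * (T * Qm)) ((1 - Qm) * (T * Qm)) := fip_self_nonneg _
    have hG : ((1 - Qm) * (T * Qm))ᴴ * ((1 - Qm) * (T * Qm))
        = Qm * T * (1 - Qm) * (T * Qm) := by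
      have hcj : ((1 - Qm) * (T * Qm))ᴴ = Qm * T * (1 - Qm) := by
        simp only [Matrix.conjTranspose_mul, Matrix.conjTranspose_sub,
          Matrix.conjTranspose_one, hQherm', hTherm]
      rw [hcj]
      have : Qm * T * (1 - Qm) * ((1 - Qm) * (T * Qm))
          = Qm * T * ((1 - Qm) * (1 - Qm)) * (T * Qm) := by
        simp only [Matrix.mul_assoc]
      rw [this, hproj]
    rw [fip, hG] at h0
    have hexp : Qm * T * (1 - Qm) * (T * Qm)
        = Qm * T * (T * Qm) - Qm * T * Qm * (T * Qm) := by noncomm_ring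
    rw [hexp, Matrix.trace_sub, Complex.sub_re] at h0
    have t1 : ((Qm * T * (T * Qm)).trace) = ((T * T * Qm).trace) := by
      rw [Matrix.trace_mul_comm]
      have : T * Qm * (Qm * T) = T * (Qm * Qm) * T := by simp only [Matrix.mul_assoc]
      rw [this, hQQ']
      rw [Matrix.trace_mul_comm]
      simp only [Matrix.mul_assoc]
    have t2 : ((Qm * T * Qm * (T * Qm)).trace) = ((T * Qm * (T * Qm)).trace) := by
      rw [Matrix.trace_mul_comm]
      have : T * Qm * (Qm * T * Qm) = T * (Qm * Qm) * (T * Qm) := by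
        simp only [Matrix.mul_assoc]
      rw [this, hQQ']
    rw [t1, t2] at h0
    linarith
  have step_b : ((T * T * Qm).trace).re ≤ ((T * T).trace).re := by
    have h0 : 0 ≤ fip (T * (1 - Qm)) (T * (1 - Qm)) := fip_self_nonneg _
    have hG : (T * (1 - Qm))ᴴ * (T * (1 - Qm)) = (1 - Qm) * (T * T) * (1 - Qm) := by
      simp only [Matrix.conjTranspose_mul, Matrix.conjTranspose_sub,
        Matrix.conjTranspose_one, hQherm', hTherm]
      simp only [Matrix.mul_assoc]
    rw [fip, hG] at h0
    have t3 : ((1 - Qm) * (T * T) * (1 - Qm)).trace = ((T * T) * (1 - Qm)).trace := by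
      rw [Matrix.trace_mul_comm]
      have : (1 - Qm) * ((1 - Qm) * (T * T)) = ((1 - Qm) * (1 - Qm)) * (T * T) := by
        simp only [Matrix.mul_assoc]
      rw [this, hproj]
      exact Matrix.trace_mul_comm _ _
    rw [t3] at h0
    have hexp : (T * T) * (1 - Qm) = T * T - T * T * Qm := by noncomm_ring
    rw [hexp, Matrix.trace_sub, Complex.sub_re] at h0
    linarith
  -- now assemble
  have hFle : fip W X ≤ Real.sqrt (fip Mᴴ Mᴴ) * Real.sqrt (fip Y Y) := by
    rw [c1]; exact fip_cs _ _
  have hTBnn : 0 ≤ (X.trace).re := by rw [← c2]; exact fip_self_nonneg _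
  have hYle : fip Y Y ≤ Real.sqrt (((B2 * B2 * (B2 * B2)).trace).re) *
      Real.sqrt (((A2 * A2 * (A2 * A2)).trace).re) := by
    rw [c3]
    refine le_trans (fip_cs _ _) ?_
    rw [c4]
    have hZZle : fip Z Z ≤ ((B2 * B2 * (B2 * B2)).trace).re := by
      rw [c5]
      refine le_trans step_a (le_trans step_b (le_of_eq ?_))
      rw [hT]
    exact mul_le_mul_of_nonneg_right (Real.sqrt_le_sqrt hZZle) (Real.sqrt_nonneg _)
  have hFnn : 0 ≤ traceNorm' X := traceNorm'_nonneg X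
  have hsq : traceNorm' X ^ 2 ≤ (X.trace).re * fip Y Y := by
    have h1 : traceNorm' X ≤ Real.sqrt ((X.trace).re) * Real.sqrt (fip Y Y) := by
      rw [hF]; rw [c2] at hFle; exact hFle
    have h2 := mul_self_le_mul_self hFnn h1
    calc traceNorm' X ^ 2 = traceNorm' X * traceNorm' X := sq (traceNorm' X) ▸ by ring
      _ ≤ (Real.sqrt ((X.trace).re) * Real.sqrt (fip Y Y)) *
          (Real.sqrt ((X.trace).re) * Real.sqrt (fip Y Y)) := h2
      _ = (Real.sqrt ((X.trace).re) * Real.sqrt ((X.trace).re)) *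
          (Real.sqrt (fip Y Y) * Real.sqrt (fip Y Y)) := by ring
      _ = (X.trace).re * fip Y Y := by
          rw [Real.mul_self_sqrt hTBnn, Real.mul_self_sqrt (fip_self_nonneg _)]
  refine le_trans hsq ?_
  have : Real.sqrt (((A2 * A2 * (A2 * A2)).trace).re) *
      Real.sqrt (((B2 * B2 * (B2 * B2)).trace).re) =
      Real.sqrt (((B2 * B2 * (B2 * B2)).trace).re) *
      Real.sqrt (((A2 * A2 * (A2 * A2)).trace).re) := by ring
  rw [this]
  exact mul_le_mul_of_nonneg_left hYle hTBnn

end key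

section decomp
variable {N : ℕ}

lemma vmv_mul (u v w x : Fin N → ℂ) :
    Matrix.vecMulVec u v * Matrix.vecMulVec w x = (v ⬝ᵥ w) • Matrix.vecMulVec u x := by
  ext i j
  simp only [Matrix.mul_apply, Matrix.vecMulVec_apply, Matrix.smul_apply, dotProduct,
    smul_eq_mul]
  rw [Finset.sum_mul]
  exact Finset.sum_congr rfl fun k _ => by ring

lemma trace_vmv (u v : Fin N → ℂ) : (Matrix.vecMulVec u v).trace = v ⬝ᵥ u := by
  simp only [Matrix.trace, Matrix.diag, Matrix.vecMulVec_apply, dotProduct]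
  exact Finset.sum_congr rfl fun k _ => mul_comm _ _

lemma conjT_vmv (u v : Fin N → ℂ) :
    (Matrix.vecMulVec u v)ᴴ = Matrix.vecMulVec (star v) (star u) := by
  ext i j
  simp only [Matrix.conjTranspose_apply, Matrix.vecMulVec_apply, Pi.star_apply, star_mul']
  ring

def Dm (c : Fin N → ℝ) (v : Fin N → Fin N → ℂ) : Matrix (Fin N) (Fin N) ℂ :=
  ∑ i, (c i : ℂ) • Matrix.vecMulVec (v i) (star (v i))

lemma Dm_herm (c : Fin N → ℝ) (v : Fin N → Fin N → ℂ) : (Dm c v)ᴴ = Dm c v := by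
  rw [Dm, Matrix.conjTranspose_sum]
  refine Finset.sum_congr rfl fun i _ => ?_
  rw [Matrix.conjTranspose_smul, conjT_vmv, star_star]
  congr 1
  exact Complex.conj_ofReal _

lemma Dm_cross_trace (c d : Fin N → ℝ) (v w : Fin N → Fin N → ℂ) :
    (Dm c v * Dm d w).trace =
      ∑ i, ∑ j, (c i : ℂ) * (d j : ℂ) *
        ((star (v i) ⬝ᵥ w j) * (star (w j) ⬝ᵥ v i)) := by
  rw [Dm, Dm, Finset.sum_mul_sum]
  rw [Matrix.trace_sum]
  refine Finset.sum_congr rfl fun i _ => ?_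
  rw [Matrix.trace_sum]
  refine Finset.sum_congr rfl fun j _ => ?_
  rw [smul_mul_assoc, Matrix.mul_smul, vmv_mul]
  rw [Matrix.trace_smul, Matrix.trace_smul, Matrix.trace_smul, trace_vmv]
  simp only [smul_eq_mul]
  ring

lemma Dm_mul {v : Fin N → Fin N → ℂ}
    (horth : ∀ i j, star (v i) ⬝ᵥ v j = if i = j then 1 else 0) (c d : Fin N → ℝ) :
    Dm c v * Dm d v = Dm (fun i => c i * d i) v := by
  rw [Dm, Dm, Finset.sum_mul_sum, Dm]
  refine Finset.sum_congr rfl fun i _ => ?_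
  have : ∀ j, ((c i : ℂ) • Matrix.vecMulVec (v i) (star (v i))) *
      ((d j : ℂ) • Matrix.vecMulVec (v j) (star (v j)))
      = ((if i = j then 1 else 0) * (c i : ℂ) * (d j : ℂ)) •
          Matrix.vecMulVec (v i) (star (v j)) := by
    intro j
    rw [smul_mul_assoc, Matrix.mul_smul, vmv_mul, horth i j]
    rw [smul_smul, smul_smul]
    congr 1
    ring
  rw [Finset.sum_congr rfl fun j _ => this j]
  rw [Finset.sum_eq_single i]
  · rw [if_pos rfl, one_mul]
    push_cast
    rfl
  · intro j _ hj
    rw [if_neg fun h => hj h.symm, zero_mul, zero_mul, zero_smul]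
  · intro h
    exact absurd (Finset.mem_univ i) h

lemma Dm_trace {v : Fin N → Fin N → ℂ}
    (horth : ∀ i j, star (v i) ⬝ᵥ v j = if i = j then 1 else 0) (c : Fin N → ℝ) :
    (Dm c v).trace = ∑ i, (c i : ℂ) := by
  rw [Dm, Matrix.trace_sum]
  refine Finset.sum_congr rfl fun i _ => ?_
  rw [Matrix.trace_smul, trace_vmv]
  have h := horth i i
  rw [if_pos rfl] at h
  have : star (v i) ⬝ᵥ v i = (star (v i)) ⬝ᵥ (v i) := rfl
  rw [show (star (v i) : Fin N → ℂ) ⬝ᵥ v i = 1 from h]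
  exact mul_one _

lemma Dm_one {v : Fin N → Fin N → ℂ}
    (horth : ∀ i j, star (v i) ⬝ᵥ v j = if i = j then 1 else 0) :
    Dm (fun _ => 1) v = 1 := by
  set V : Matrix (Fin N) (Fin N) ℂ := Matrix.of (fun i j => v j i) with hV
  have hVV : Vᴴ * V = 1 := by
    ext i j
    rw [Matrix.mul_apply, Matrix.one_apply]
    have := horth i j
    simp only [dotProduct, Pi.star_apply] at this
    simp only [Matrix.conjTranspose_apply, hV, Matrix.of_apply, star]
    rw [← this]
    rfl
  have hVV' : V * Vᴴ = 1 := mul_eq_one_comm.mp hVV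
  rw [← hVV']
  ext i j
  rw [Dm, Matrix.sum_apply, Matrix.mul_apply]
  simp only [Matrix.smul_apply, Matrix.vecMulVec_apply, Complex.ofReal_one, one_smul,
    Matrix.conjTranspose_apply, hV, Matrix.of_apply, Pi.star_apply]

lemma Dm_psd {v : Fin N → Fin N → ℂ}
    (horth : ∀ i j, star (v i) ⬝ᵥ v j = if i = j then 1 else 0) (c : Fin N → ℝ)
    (hc : ∀ i, 0 ≤ c i) : (Dm c v).PosSemidef := by
  have h1 : Dm c v = (Dm (fun i => Real.sqrt (c i)) v)ᴴ * (Dm (fun i => Real.sqrt (c i)) v) := by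
    rw [Dm_herm, Dm_mul horth]
    have : (fun i => Real.sqrt (c i) * Real.sqrt (c i)) = c := by
      funext i
      rw [Real.mul_self_sqrt (hc i)]
    rw [this]
  rw [h1]
  exact Matrix.posSemidef_conjTranspose_mul_self _

end decomp

lemma classical_bound {ι : Type*} [Fintype ι] (p q : ι → ℝ)
    (hp : ∀ i, 0 ≤ p i) (hq : ∀ i, 0 ≤ q i)
    (hp1 : ∑ i, p i = 1) (hq1 : ∑ i, q i = 1)
    (F : ℝ) (hF0 : 0 ≤ F) (hFB : F ^ 2 ≤ ∑ i, Real.sqrt (p i * q i)) :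
    1 - 2 * (1 - F) ^ ((1 : ℝ)/4) ≤ ∑ i, min (p i) (q i) := by
  set B := ∑ i, Real.sqrt (p i * q i) with hB
  have hBnn : 0 ≤ B := Finset.sum_nonneg fun i _ => Real.sqrt_nonneg _
  have hB1 : B ≤ 1 := by
    have h := Finset.sum_sq_le_sum_mul_sum_of_sq_eq_mul Finset.univ
      (fun i (_ : i ∈ Finset.univ) => hp i) (fun i _ => hq i)
      (fun i _ => Real.sq_sqrt (mul_nonneg (hp i) (hq i)))
    rw [hp1, hq1, mul_one] at h
    nlinarith
  have hF1 : F ≤ 1 := by nlinarith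
  have hs1 : ∑ i, (Real.sqrt (p i) - Real.sqrt (q i)) ^ 2 = 2 - 2 * B := by
    have hterm : ∀ i, (Real.sqrt (p i) - Real.sqrt (q i)) ^ 2
        = p i + q i - 2 * Real.sqrt (p i * q i) := by
      intro i
      rw [sub_sq, Real.sq_sqrt (hp i), Real.sq_sqrt (hq i), Real.sqrt_mul (hp i)]
      ring
    rw [Finset.sum_congr rfl fun i _ => hterm i]
    rw [Finset.sum_sub_distrib, Finset.sum_add_distrib, ← Finset.mul_sum, hp1, hq1, ← hB]
    ring
  have hs2 : ∑ i, (Real.sqrt (p i) + Real.sqrt (q i)) ^ 2 = 2 + 2 * B := by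
    have hterm : ∀ i, (Real.sqrt (p i) + Real.sqrt (q i)) ^ 2
        = p i + q i + 2 * Real.sqrt (p i * q i) := by
      intro i
      rw [add_sq, Real.sq_sqrt (hp i), Real.sq_sqrt (hq i), Real.sqrt_mul (hp i)]
      ring
    rw [Finset.sum_congr rfl fun i _ => hterm i]
    rw [Finset.sum_add_distrib, Finset.sum_add_distrib, ← Finset.mul_sum, hp1, hq1, ← hB]
    ring
  have hT2 : (∑ i, |p i - q i|) ^ 2 ≤ (2 - 2 * B) * (2 + 2 * B) := by
    have hid : ∀ i, |p i - q i|
        = |Real.sqrt (p i) - Real.sqrt (q i)| * (Real.sqrt (p i) + Real.sqrt (q i)) := by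
      intro i
      rw [← abs_of_nonneg (add_nonneg (Real.sqrt_nonneg (p i)) (Real.sqrt_nonneg (q i))),
        ← abs_mul]
      congr 1
      have : (Real.sqrt (p i) - Real.sqrt (q i)) * (Real.sqrt (p i) + Real.sqrt (q i))
          = Real.sqrt (p i) * Real.sqrt (p i) - Real.sqrt (q i) * Real.sqrt (q i) := by ring
      rw [this, Real.mul_self_sqrt (hp i), Real.mul_self_sqrt (hq i)]
    rw [Finset.sum_congr rfl fun i _ => hid i]
    have h := Finset.sum_mul_sq_le_sq_mul_sq Finset.univ
      (fun i => |Real.sqrt (p i) - Real.sqrt (q i)|)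
      (fun i => Real.sqrt (p i) + Real.sqrt (q i))
    simp only [sq_abs] at h
    rw [hs1, hs2] at h
    exact h
  have hT2' : (∑ i, |p i - q i|) ^ 2 ≤ 16 * (1 - F) := by
    have hBF : F ^ 4 ≤ B ^ 2 := by nlinarith [sq_nonneg F]
    nlinarith [sq_nonneg (F - 1), sq_nonneg (F + 1)]
  have hTnn : 0 ≤ ∑ i, |p i - q i| := Finset.sum_nonneg fun i _ => abs_nonneg _
  have hT : ∑ i, |p i - q i| ≤ 4 * Real.sqrt (1 - F) := by
    have h := Real.sqrt_le_sqrt hT2'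
    rw [Real.sqrt_sq hTnn] at h
    rw [show (16 : ℝ) * (1 - F) = 4 ^ 2 * (1 - F) by norm_num] at h
    rw [Real.sqrt_mul (by positivity), Real.sqrt_sq (by norm_num : (0:ℝ) ≤ 4)] at h
    exact h
  have hmin : ∑ i, min (p i) (q i) = 1 - (∑ i, |p i - q i|) / 2 := by
    have hterm : ∀ i, min (p i) (q i) = (p i + q i - |p i - q i|) / 2 := by
      intro i
      rcases le_total (p i) (q i) with h | h
      · rw [min_eq_left h, abs_of_nonpos (by linarith)]; ring
      · rw [min_eq_right h, abs_of_nonneg (by linarith)]; ring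
    rw [Finset.sum_congr rfl fun i _ => hterm i, ← Finset.sum_div,
      Finset.sum_sub_distrib, Finset.sum_add_distrib, hp1, hq1]
    ring
  have h14 : Real.sqrt (1 - F) ≤ (1 - F) ^ ((1 : ℝ)/4) := by
    have h0 : 0 ≤ 1 - F := by linarith
    rcases eq_or_lt_of_le h0 with h | h
    · rw [← h, Real.sqrt_zero, Real.zero_rpow (by norm_num : (1:ℝ)/4 ≠ 0)]
    · rw [Real.sqrt_eq_rpow]
      exact Real.rpow_le_rpow_of_exponent_ge h (by linarith) (by norm_num)
  rw [hmin]
  linarith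

lemma Dm_cross_re {N : ℕ} (c d : Fin N → ℝ) (v w : Fin N → Fin N → ℂ) :
    ((Dm c v * Dm d w).trace).re = ∑ i, ∑ j, c i * d j * ‖star (v i) ⬝ᵥ w j‖ ^ 2 := by
  rw [Dm_cross_trace, Complex.re_sum]
  refine Finset.sum_congr rfl fun i _ => ?_
  rw [Complex.re_sum]
  refine Finset.sum_congr rfl fun j _ => ?_
  have hzw : star (w j) ⬝ᵥ v i = (starRingEnd ℂ) (star (v i) ⬝ᵥ w j) := by
    rw [dotProduct, dotProduct, map_sum]
    refine Finset.sum_congr rfl fun k _ => ?_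
    simp only [Pi.star_apply, RCLike.star_def, _root_.map_mul, Complex.conj_conj]
    ring
  rw [hzw, Complex.mul_conj]
  rw [← Complex.ofReal_mul, ← Complex.ofReal_mul, Complex.ofReal_re]
  rw [Complex.normSq_eq_norm_sq]

theorem stmt6' {N : ℕ} (ρ ρ' : Matrix (Fin N) (Fin N) ℂ)
    (a g : Fin N → ℝ) (av gv : Fin N → (Fin N → ℂ))
    (hao : ∀ i j, star (av i) ⬝ᵥ av j = if i = j then 1 else 0)
    (hgo : ∀ i j, star (gv i) ⬝ᵥ gv j = if i = j then 1 else 0)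
    (hann : ∀ i, 0 ≤ a i) (hgnn : ∀ i, 0 ≤ g i)
    (ha1 : ∑ i, a i = 1) (hg1 : ∑ i, g i = 1)
    (hρ : ρ = ∑ i, (a i : ℂ) • Matrix.vecMulVec (av i) (star (av i)))
    (hρ' : ρ' = ∑ j, (g j : ℂ) • Matrix.vecMulVec (gv j) (star (gv j))) :
    1 - 2 * (1 - fid ρ ρ') ^ ((1 : ℝ) / 4) ≤
      ∑ i, ∑ j, min (a i * ‖star (av i) ⬝ᵥ gv j‖ ^ 2)
        (g j * ‖star (av i) ⬝ᵥ gv j‖ ^ 2) := by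
  classical
  have hρD : ρ = Dm a av := hρ
  have hρ'D : ρ' = Dm g gv := hρ'
  set sa : Fin N → ℝ := fun i => Real.sqrt (a i) with hsa
  set sg : Fin N → ℝ := fun j => Real.sqrt (g j) with hsg
  set qa : Fin N → ℝ := fun i => Real.sqrt (sa i) with hqa
  set qg : Fin N → ℝ := fun j => Real.sqrt (sg j) with hqg
  have hsqρ : psqrt ρ = Dm sa av := by
    refine psqrt_eq_of_sq (by rw [hρD]; exact Dm_psd hao a hann)
      (Dm_psd hao sa fun i => Real.sqrt_nonneg _) ?_
    rw [Dm_mul hao, hρD,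
      show (fun i => sa i * sa i) = a from funext fun i => Real.mul_self_sqrt (hann i)]
  have hsqρ' : psqrt ρ' = Dm sg gv := by
    refine psqrt_eq_of_sq (by rw [hρ'D]; exact Dm_psd hgo g hgnn)
      (Dm_psd hgo sg fun i => Real.sqrt_nonneg _) ?_
    rw [Dm_mul hgo, hρ'D,
      show (fun j => sg j * sg j) = g from funext fun j => Real.mul_self_sqrt (hgnn j)]
  have hR4sq : Dm qa av * Dm qa av = Dm sa av := by
    rw [Dm_mul hao,
      show (fun i => qa i * qa i) = sa from funext fun i => Real.mul_self_sqrt (Real.sqrt_nonneg _)]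
  have hS4sq : Dm qg gv * Dm qg gv = Dm sg gv := by
    rw [Dm_mul hgo,
      show (fun j => qg j * qg j) = sg from funext fun j => Real.mul_self_sqrt (Real.sqrt_nonneg _)]
  have hkey := key_ineq (Dm qa av) (Dm qg gv) (Dm_herm qa av) (Dm_herm qg gv)
  rw [hR4sq, hS4sq] at hkey
  have eA : ((Dm sa av * Dm sa av).trace).re = 1 := by
    have h : Dm sa av * Dm sa av = Dm a av := by
      rw [Dm_mul hao,
        show (fun i => sa i * sa i) = a from funext fun i => Real.mul_self_sqrt (hann i)]
    rw [h, Dm_trace hao, Complex.re_sum]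
    simp only [Complex.ofReal_re]
    exact ha1
  have eB : ((Dm sg gv * Dm sg gv).trace).re = 1 := by
    have h : Dm sg gv * Dm sg gv = Dm g gv := by
      rw [Dm_mul hgo,
        show (fun j => sg j * sg j) = g from funext fun j => Real.mul_self_sqrt (hgnn j)]
    rw [h, Dm_trace hgo, Complex.re_sum]
    simp only [Complex.ofReal_re]
    exact hg1
  rw [eA, eB, Real.sqrt_one, mul_one, mul_one] at hkey
  have hfid : fid ρ ρ' = traceNorm' (Dm sa av * Dm sg gv) := by
    have h0 : fid ρ ρ' = traceNorm' (psqrt ρ * psqrt ρ') := rfl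
    rw [h0, hsqρ, hsqρ']
  -- probability data
  set p : Fin N × Fin N → ℝ := fun x => a x.1 * ‖star (av x.1) ⬝ᵥ gv x.2‖ ^ 2 with hp_def
  set q : Fin N × Fin N → ℝ := fun x => g x.2 * ‖star (av x.1) ⬝ᵥ gv x.2‖ ^ 2 with hq_def
  have hp : ∀ x, 0 ≤ p x := fun x => mul_nonneg (hann x.1) (sq_nonneg _)
  have hq : ∀ x, 0 ≤ q x := fun x => mul_nonneg (hgnn x.2) (sq_nonneg _)
  have hp1 : ∑ x, p x = 1 := by
    rw [Fintype.sum_prod_type]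
    have h := Dm_cross_re a (fun _ => 1) av gv
    rw [Dm_one hgo, mul_one, Dm_trace hao, Complex.re_sum] at h
    simp only [Complex.ofReal_re] at h
    rw [ha1] at h
    rw [show (∑ i, ∑ j, p (i, j)) = ∑ i, ∑ j, a i * 1 * ‖star (av i) ⬝ᵥ gv j‖ ^ 2 by
      refine Finset.sum_congr rfl fun i _ => Finset.sum_congr rfl fun j _ => ?_
      rw [mul_one]]
    exact h.symm
  have hq1 : ∑ x, q x = 1 := by
    rw [Fintype.sum_prod_type]
    have h := Dm_cross_re (fun _ => 1) g av gv
    rw [Dm_one hao, one_mul, Dm_trace hgo, Complex.re_sum] at h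
    simp only [Complex.ofReal_re] at h
    rw [hg1] at h
    rw [show (∑ i, ∑ j, q (i, j)) = ∑ i, ∑ j, (1 : ℝ) * g j * ‖star (av i) ⬝ᵥ gv j‖ ^ 2 by
      refine Finset.sum_congr rfl fun i _ => Finset.sum_congr rfl fun j _ => ?_
      rw [one_mul]]
    exact h.symm
  have hF0 : 0 ≤ fid ρ ρ' := by rw [hfid]; exact traceNorm'_nonneg _
  have hFB : fid ρ ρ' ^ 2 ≤ ∑ x, Real.sqrt (p x * q x) := by
    rw [hfid]
    refine le_trans hkey (le_of_eq ?_)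
    rw [Dm_cross_re sa sg av gv, Fintype.sum_prod_type]
    refine Finset.sum_congr rfl fun i _ => Finset.sum_congr rfl fun j _ => ?_
    have hc : (0 : ℝ) ≤ ‖star (av i) ⬝ᵥ gv j‖ ^ 2 := sq_nonneg _
    rw [hp_def, hq_def]
    simp only
    rw [show a i * ‖star (av i) ⬝ᵥ gv j‖ ^ 2 * (g j * ‖star (av i) ⬝ᵥ gv j‖ ^ 2)
        = (a i * g j) * (‖star (av i) ⬝ᵥ gv j‖ ^ 2) ^ 2 by ring]
    rw [Real.sqrt_mul (mul_nonneg (hann i) (hgnn j)), Real.sqrt_sq hc,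
      Real.sqrt_mul (hann i)]
  have main := classical_bound p q hp hq hp1 hq1 (fid ρ ρ') hF0 hFB
  rw [Fintype.sum_prod_type] at main
  exact main


/-- Σ_{i,j} min(aᵢ|⟨aᵢ|gⱼ⟩|², gⱼ|⟨aᵢ|gⱼ⟩|²) ≥ 1 − 2(1 − F(ρ,ρ'))^{1/4}. -/
theorem stmt6 {N : ℕ} (ρ ρ' : Matrix (Fin N) (Fin N) ℂ)
    (a g : Fin N → ℝ) (av gv : Fin N → (Fin N → ℂ))
    (hao : ∀ i j, star (av i) ⬝ᵥ av j = if i = j then 1 else 0)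
    (hgo : ∀ i j, star (gv i) ⬝ᵥ gv j = if i = j then 1 else 0)
    (hann : ∀ i, 0 ≤ a i) (hgnn : ∀ i, 0 ≤ g i)
    (ha1 : ∑ i, a i = 1) (hg1 : ∑ i, g i = 1)
    (hρ : ρ = ∑ i, (a i : ℂ) • Matrix.vecMulVec (av i) (star (av i)))
    (hρ' : ρ' = ∑ j, (g j : ℂ) • Matrix.vecMulVec (gv j) (star (gv j))) :
    1 - 2 * (1 - fid ρ ρ') ^ ((1 : ℝ) / 4) ≤
      ∑ i, ∑ j, min (a i * ‖star (av i) ⬝ᵥ gv j‖ ^ 2)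
        (g j * ‖star (av i) ⬝ᵥ gv j‖ ^ 2) :=
  stmt6' ρ ρ' a g av gv hao hgo hann hgnn ha1 hg1 hρ hρ'
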